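/- Pappus' hexagon theorem: if A, B, C are collinear points and a, b, c are collinear points in a projective plane satisfying Pappus' axiom (e.g. over a field), then the three intersection points G = Ab ∩ aB, H = Ac ∩ aC, I = Bc ∩ bC are collinear. -/
import Mathlib

lemma col_of_det {k : Type*} [Field k] (P Q R : Fin 2 → k)
    (h : (Q 0 - P 0) * (R 1 - P 1) - (Q 1 - P 1) * (R 0 - P 0) = 0) :
    Collinear k {P, Q, R} := by
  rcases eq_or_ne Q P with rfl | hQP
  · rw [Set.insert_comm, Set.insert_idem]
    exact collinear_pair k Q R
  · have hmem : R ∈ line[k, P, Q] := by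
      rw [← vsub_vadd R P, vadd_left_mem_affineSpan_pair]
      by_cases h0 : Q 0 = P 0
      · have h1 : Q 1 ≠ P 1 := by
          intro h1; apply hQP; funext i; fin_cases i <;> assumption
        refine ⟨(R 1 - P 1) / (Q 1 - P 1), ?_⟩
        funext i
        fin_cases i
        · show (R 1 - P 1) / (Q 1 - P 1) * (Q 0 - P 0) = R 0 - P 0
          rw [div_mul_eq_mul_div, div_eq_iff (sub_ne_zero.2 h1)]
          linear_combination h
        · show (R 1 - P 1) / (Q 1 - P 1) * (Q 1 - P 1) = R 1 - P 1
          rw [div_mul_eq_mul_div, div_eq_iff (sub_ne_zero.2 h1)]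
      · refine ⟨(R 0 - P 0) / (Q 0 - P 0), ?_⟩
        funext i
        fin_cases i
        · show (R 0 - P 0) / (Q 0 - P 0) * (Q 0 - P 0) = R 0 - P 0
          rw [div_mul_eq_mul_div, div_eq_iff (sub_ne_zero.2 h0)]
        · show (R 0 - P 0) / (Q 0 - P 0) * (Q 1 - P 1) = R 1 - P 1
          rw [div_mul_eq_mul_div, div_eq_iff (sub_ne_zero.2 h0)]
          linear_combination -h
    have := collinear_insert_of_mem_affineSpan_pair hmem
    have hset : ({R, P, Q} : Set (Fin 2 → k)) = {P, Q, R} := by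
      ext x; simp only [Set.mem_insert_iff, Set.mem_singleton_iff]; tauto
    rwa [hset] at this

set_option maxHeartbeats 1000000 in
/-- **Pappus' hexagon theorem** (affine version over a field).  Let `A, B, C`
be collinear and `a, b, c` be collinear in the plane `k²`, in non-degenerate
position: none of `a, b, c` lies on the line `AB` and none of `A, B, C` lies
on the line `ab`.  If `G` lies on both lines `Ab` and `aB`, `H` lies on both
lines `Ac` and `aC`, and `I` lies on both lines `Bc` and `bC`, then `G, H, I`
are collinear. -/
theorem stmt5 {k : Type*} [Field k]
    (A B C a b c G H I : Fin 2 → k)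
    (hABC : Collinear k {A, B, C}) (habc : Collinear k {a, b, c})
    (ha : ¬ Collinear k {A, B, a}) (hb : ¬ Collinear k {A, B, b})
    (hc : ¬ Collinear k {A, B, c})
    (hA : ¬ Collinear k {a, b, A}) (hB : ¬ Collinear k {a, b, B})
    (hC : ¬ Collinear k {a, b, C})
    (hG₁ : G ∈ affineSpan k {A, b}) (hG₂ : G ∈ affineSpan k {a, B})
    (hH₁ : H ∈ affineSpan k {A, c}) (hH₂ : H ∈ affineSpan k {a, C})
    (hI₁ : I ∈ affineSpan k {B, c}) (hI₂ : I ∈ affineSpan k {b, C}) :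
    Collinear k {G, H, I} := by
  have hAB : A ≠ B := by
    rintro rfl; apply ha; rw [Set.insert_idem]; exact collinear_pair k A a
  have hab : a ≠ b := by
    rintro rfl; apply hA; rw [Set.insert_idem]; exact collinear_pair k a A
  have hCmem : C ∈ line[k, A, B] :=
    hABC.mem_affineSpan_of_mem_of_ne (Set.mem_insert _ _)
      (Set.mem_insert_of_mem _ (Set.mem_insert _ _))
      (Set.mem_insert_of_mem _ (Set.mem_insert_of_mem _ rfl)) hAB
  have hcmem : c ∈ line[k, a, b] :=
    habc.mem_affineSpan_of_mem_of_ne (Set.mem_insert _ _)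
      (Set.mem_insert_of_mem _ (Set.mem_insert _ _))
      (Set.mem_insert_of_mem _ (Set.mem_insert_of_mem _ rfl)) hab
  rw [← vsub_vadd C A, vadd_left_mem_affineSpan_pair] at hCmem
  obtain ⟨u, hu⟩ := hCmem
  rw [← vsub_vadd c a, vadd_left_mem_affineSpan_pair] at hcmem
  obtain ⟨v, hv⟩ := hcmem
  rw [← vsub_vadd G A, vadd_left_mem_affineSpan_pair] at hG₁
  obtain ⟨t1, ht1⟩ := hG₁
  rw [← vsub_vadd G a, vadd_left_mem_affineSpan_pair] at hG₂
  obtain ⟨t2, ht2⟩ := hG₂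
  rw [← vsub_vadd H A, vadd_left_mem_affineSpan_pair] at hH₁
  obtain ⟨t3, ht3⟩ := hH₁
  rw [← vsub_vadd H a, vadd_left_mem_affineSpan_pair] at hH₂
  obtain ⟨t4, ht4⟩ := hH₂
  rw [← vsub_vadd I B, vadd_left_mem_affineSpan_pair] at hI₁
  obtain ⟨t5, ht5⟩ := hI₁
  rw [← vsub_vadd I b, vadd_left_mem_affineSpan_pair] at hI₂
  obtain ⟨t6, ht6⟩ := hI₂
  have hu0 : u * (B 0 - A 0) = C 0 - A 0 := by simpa using congrFun hu 0
  have hu1 : u * (B 1 - A 1) = C 1 - A 1 := by simpa using congrFun hu 1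
  have hv0 : v * (b 0 - a 0) = c 0 - a 0 := by simpa using congrFun hv 0
  have hv1 : v * (b 1 - a 1) = c 1 - a 1 := by simpa using congrFun hv 1
  have g10 : t1 * (b 0 - A 0) = G 0 - A 0 := by simpa using congrFun ht1 0
  have g11 : t1 * (b 1 - A 1) = G 1 - A 1 := by simpa using congrFun ht1 1
  have g20 : t2 * (B 0 - a 0) = G 0 - a 0 := by simpa using congrFun ht2 0
  have g21 : t2 * (B 1 - a 1) = G 1 - a 1 := by simpa using congrFun ht2 1
  have hc0 : c 0 = a 0 + v * (b 0 - a 0) := by linear_combination -hv0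
  have hc1 : c 1 = a 1 + v * (b 1 - a 1) := by linear_combination -hv1
  have hC0 : C 0 = A 0 + u * (B 0 - A 0) := by linear_combination -hu0
  have hC1 : C 1 = A 1 + u * (B 1 - A 1) := by linear_combination -hu1
  have h30 : t3 * (a 0 + v * (b 0 - a 0) - A 0) = H 0 - A 0 := by
    have h' := congrFun ht3 0; simp only [Pi.smul_apply, vsub_eq_sub, Pi.sub_apply,
      smul_eq_mul] at h'; rw [hc0] at h'; linear_combination h'
  have h31 : t3 * (a 1 + v * (b 1 - a 1) - A 1) = H 1 - A 1 := by
    have h' := congrFun ht3 1; simp only [Pi.smul_apply, vsub_eq_sub, Pi.sub_apply,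
      smul_eq_mul] at h'; rw [hc1] at h'; linear_combination h'
  have h40 : t4 * (A 0 + u * (B 0 - A 0) - a 0) = H 0 - a 0 := by
    have h' := congrFun ht4 0; simp only [Pi.smul_apply, vsub_eq_sub, Pi.sub_apply,
      smul_eq_mul] at h'; rw [hC0] at h'; linear_combination h'
  have h41 : t4 * (A 1 + u * (B 1 - A 1) - a 1) = H 1 - a 1 := by
    have h' := congrFun ht4 1; simp only [Pi.smul_apply, vsub_eq_sub, Pi.sub_apply,
      smul_eq_mul] at h'; rw [hC1] at h'; linear_combination h'
  have h50 : t5 * (a 0 + v * (b 0 - a 0) - B 0) = I 0 - B 0 := by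
    have h' := congrFun ht5 0; simp only [Pi.smul_apply, vsub_eq_sub, Pi.sub_apply,
      smul_eq_mul] at h'; rw [hc0] at h'; linear_combination h'
  have h51 : t5 * (a 1 + v * (b 1 - a 1) - B 1) = I 1 - B 1 := by
    have h' := congrFun ht5 1; simp only [Pi.smul_apply, vsub_eq_sub, Pi.sub_apply,
      smul_eq_mul] at h'; rw [hc1] at h'; linear_combination h'
  have h60 : t6 * (A 0 + u * (B 0 - A 0) - b 0) = I 0 - b 0 := by
    have h' := congrFun ht6 0; simp only [Pi.smul_apply, vsub_eq_sub, Pi.sub_apply,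
      smul_eq_mul] at h'; rw [hC0] at h'; linear_combination h'
  have h61 : t6 * (A 1 + u * (B 1 - A 1) - b 1) = I 1 - b 1 := by
    have h' := congrFun ht6 1; simp only [Pi.smul_apply, vsub_eq_sub, Pi.sub_apply,
      smul_eq_mul] at h'; rw [hC1] at h'; linear_combination h'
  have hL0 : ((b 0 - a 0) * (A 1 - a 1) - (b 1 - a 1) * (A 0 - a 0)) ≠ 0 := fun hh => hA (col_of_det a b A hh)
  have hKb : ((B 0 - A 0) * (b 1 - A 1) - (B 1 - A 1) * (b 0 - A 0)) ≠ 0 := fun hh => hb (col_of_det A B b hh)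
  have hKc : ((B 0 - A 0) * (a 1 + v * (b 1 - a 1) - A 1) - (B 1 - A 1) * (a 0 + v * (b 0 - a 0) - A 0)) ≠ 0 := by
    intro hh; apply hc; apply col_of_det A B c
    rw [hc0, hc1]; linear_combination hh
  have hLC : ((b 0 - a 0) * (A 1 + u * (B 1 - A 1) - a 1) - (b 1 - a 1) * (A 0 + u * (B 0 - A 0) - a 0)) ≠ 0 := by
    intro hh; apply hC; apply col_of_det a b C
    rw [hC0, hC1]; linear_combination hh
  obtain ⟨L, hLd⟩ : ∃ x : k, x = (b 0 - a 0) * (A 1 - a 1) - (b 1 - a 1) * (A 0 - a 0) := ⟨_, rfl⟩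
  obtain ⟨lB, hlB⟩ : ∃ x : k, x = (B 0 - a 0) * (A 1 - a 1) - (B 1 - a 1) * (A 0 - a 0) := ⟨_, rfl⟩
  obtain ⟨mB, hmB⟩ : ∃ x : k, x = (b 0 - a 0) * (B 1 - a 1) - (b 1 - a 1) * (B 0 - a 0) := ⟨_, rfl⟩
  obtain ⟨lG, hlG⟩ : ∃ x : k, x = (G 0 - a 0) * (A 1 - a 1) - (G 1 - a 1) * (A 0 - a 0) := ⟨_, rfl⟩
  obtain ⟨mG, hmG⟩ : ∃ x : k, x = (b 0 - a 0) * (G 1 - a 1) - (b 1 - a 1) * (G 0 - a 0) := ⟨_, rfl⟩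
  obtain ⟨lH, hlH⟩ : ∃ x : k, x = (H 0 - a 0) * (A 1 - a 1) - (H 1 - a 1) * (A 0 - a 0) := ⟨_, rfl⟩
  obtain ⟨mH, hmH⟩ : ∃ x : k, x = (b 0 - a 0) * (H 1 - a 1) - (b 1 - a 1) * (H 0 - a 0) := ⟨_, rfl⟩
  obtain ⟨lI, hlI⟩ : ∃ x : k, x = (I 0 - a 0) * (A 1 - a 1) - (I 1 - a 1) * (A 0 - a 0) := ⟨_, rfl⟩
  obtain ⟨mI, hmI⟩ : ∃ x : k, x = (b 0 - a 0) * (I 1 - a 1) - (b 1 - a 1) * (I 0 - a 0) := ⟨_, rfl⟩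
  have hLne : L ≠ 0 := by rw [hLd]; exact hL0
  have T1a : t1 * (L - (0 : k)) = lG - (0 : k) := by
    simp only [hLd, hlB, hmB, hlG, hmG, hlH, hmH, hlI, hmI]
    linear_combination (A 1 - a 1) * g10 - (A 0 - a 0) * g11
  have T1b : t1 * ((0 : k) - L) = mG - L := by
    simp only [hLd, hlB, hmB, hlG, hmG, hlH, hmH, hlI, hmI]
    linear_combination (b 0 - a 0) * g11 - (b 1 - a 1) * g10
  have T2a : t2 * (lB - (0 : k)) = lG - (0 : k) := by
    simp only [hLd, hlB, hmB, hlG, hmG, hlH, hmH, hlI, hmI]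
    linear_combination (A 1 - a 1) * g20 - (A 0 - a 0) * g21
  have T2b : t2 * (mB - (0 : k)) = mG - (0 : k) := by
    simp only [hLd, hlB, hmB, hlG, hmG, hlH, hmH, hlI, hmI]
    linear_combination (b 0 - a 0) * g21 - (b 1 - a 1) * g20
  have T3a : t3 * ((0 : k) + v * (L - (0 : k)) - (0 : k)) = lH - (0 : k) := by
    simp only [hLd, hlB, hmB, hlG, hmG, hlH, hmH, hlI, hmI]
    linear_combination (A 1 - a 1) * h30 - (A 0 - a 0) * h31
  have T3b : t3 * ((0 : k) + v * ((0 : k) - (0 : k)) - L) = mH - L := by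
    simp only [hLd, hlB, hmB, hlG, hmG, hlH, hmH, hlI, hmI]
    linear_combination (b 0 - a 0) * h31 - (b 1 - a 1) * h30
  have T4a : t4 * ((0 : k) + u * (lB - (0 : k)) - (0 : k)) = lH - (0 : k) := by
    simp only [hLd, hlB, hmB, hlG, hmG, hlH, hmH, hlI, hmI]
    linear_combination (A 1 - a 1) * h40 - (A 0 - a 0) * h41
  have T4b : t4 * (L + u * (mB - L) - (0 : k)) = mH - (0 : k) := by
    simp only [hLd, hlB, hmB, hlG, hmG, hlH, hmH, hlI, hmI]
    linear_combination (b 0 - a 0) * h41 - (b 1 - a 1) * h40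
  have T5a : t5 * ((0 : k) + v * (L - (0 : k)) - lB) = lI - lB := by
    simp only [hLd, hlB, hmB, hlG, hmG, hlH, hmH, hlI, hmI]
    linear_combination (A 1 - a 1) * h50 - (A 0 - a 0) * h51
  have T5b : t5 * ((0 : k) + v * ((0 : k) - (0 : k)) - mB) = mI - mB := by
    simp only [hLd, hlB, hmB, hlG, hmG, hlH, hmH, hlI, hmI]
    linear_combination (b 0 - a 0) * h51 - (b 1 - a 1) * h50
  have T6a : t6 * ((0 : k) + u * (lB - (0 : k)) - L) = lI - L := by
    simp only [hLd, hlB, hmB, hlG, hmG, hlH, hmH, hlI, hmI]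
    linear_combination (A 1 - a 1) * h60 - (A 0 - a 0) * h61
  have T6b : t6 * (L + u * (mB - L) - (0 : k)) = mI - (0 : k) := by
    simp only [hLd, hlB, hmB, hlG, hmG, hlH, hmH, hlI, hmI]
    linear_combination (b 0 - a 0) * h61 - (b 1 - a 1) * h60
  have nKb : (lB - (0 : k)) * ((0 : k) - L) - (mB - L) * (L - (0 : k)) ≠ 0 := by
    intro hh
    simp only [hLd, hlB, hmB] at hh
    have h2 : ((B 0 - A 0) * (b 1 - A 1) - (B 1 - A 1) * (b 0 - A 0)) * ((b 0 - a 0) * (A 1 - a 1) - (b 1 - a 1) * (A 0 - a 0)) = 0 := by linear_combination hh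
    exact hKb ((mul_eq_zero.1 h2).resolve_right hL0)
  have nKc : (lB - (0 : k)) * ((0 : k) + v * ((0 : k) - (0 : k)) - L) - (mB - L) * ((0 : k) + v * (L - (0 : k)) - (0 : k)) ≠ 0 := by
    intro hh
    simp only [hLd, hlB, hmB] at hh
    have h2 : ((B 0 - A 0) * (a 1 + v * (b 1 - a 1) - A 1) - (B 1 - A 1) * (a 0 + v * (b 0 - a 0) - A 0)) * ((b 0 - a 0) * (A 1 - a 1) - (b 1 - a 1) * (A 0 - a 0)) = 0 := by linear_combination hh
    exact hKc ((mul_eq_zero.1 h2).resolve_right hL0)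
  have nLC : (L - (0 : k)) * (L + u * (mB - L) - (0 : k)) - ((0 : k) - (0 : k)) * ((0 : k) + u * (lB - (0 : k)) - (0 : k)) ≠ 0 := by
    intro hh
    simp only [hLd, hlB, hmB] at hh
    have h2 : ((b 0 - a 0) * (A 1 + u * (B 1 - A 1) - a 1) - (b 1 - a 1) * (A 0 + u * (B 0 - A 0) - a 0)) * ((b 0 - a 0) * (A 1 - a 1) - (b 1 - a 1) * (A 0 - a 0)) = 0 := by linear_combination hh
    exact hLC ((mul_eq_zero.1 h2).resolve_right hL0)
  have hD1 : ((L - (0 : k)) * (mB - (0 : k)) - ((0 : k) - L) * (lB - (0 : k))) ≠ 0 := by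
    intro hd
    apply nKb
    linear_combination (t2 - 1) * hd - ((0 : k) - L) * (T1a - T2a) + (L - (0 : k)) * (T1b - T2b)
  by_cases hD2 : (((0 : k) + v * (L - (0 : k)) - (0 : k)) * (L + u * (mB - L) - (0 : k)) - ((0 : k) + v * ((0 : k) - (0 : k)) - L) * ((0 : k) + u * (lB - (0 : k)) - (0 : k))) = 0
  · -- degenerate: C = A and c = a, show G = I
    have hu' : u = 0 := by
      have huKc : u * ((lB - (0 : k)) * ((0 : k) + v * ((0 : k) - (0 : k)) - L) - (mB - L) * ((0 : k) + v * (L - (0 : k)) - (0 : k))) = 0 := by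
        linear_combination (t4 - 1) * hD2 - ((0 : k) + v * ((0 : k) - (0 : k)) - L) * (T3a - T4a) + ((0 : k) + v * (L - (0 : k)) - (0 : k)) * (T3b - T4b)
      exact (mul_eq_zero.1 huKc).resolve_right nKc
    have hv' : v = 0 := by
      have hvLC : v * ((L - (0 : k)) * (L + u * (mB - L) - (0 : k)) - ((0 : k) - (0 : k)) * ((0 : k) + u * (lB - (0 : k)) - (0 : k))) = 0 := by
        linear_combination (1 - t3) * hD2 + (L + u * (mB - L) - (0 : k)) * (T3a - T4a) - ((0 : k) + u * (lB - (0 : k)) - (0 : k)) * (T3b - T4b)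
      exact (mul_eq_zero.1 hvLC).resolve_right nLC
    subst hu' hv'
    have halpha : (t1 - 1 + t6) * (((L - (0 : k)) * (mB - (0 : k)) - ((0 : k) - L) * (lB - (0 : k)))) = 0 := by
      linear_combination (mB - (0 : k)) * ((T1a - T6a) - (T2a - T5a)) - (lB - (0 : k)) * ((T1b - T6b) - (T2b - T5b))
    have halpha' : t1 - 1 + t6 = 0 := (mul_eq_zero.1 halpha).resolve_right hD1
    have eL : lG = lI := by linear_combination (L - (0 : k)) * halpha' - T1a + T6a
    have eM : mG = mI := by linear_combination ((0 : k) - L) * halpha' - T1b + T6b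
    have hGI : G = I := by
      simp only [hlG, hlI] at eL
      simp only [hmG, hmI] at eM
      funext i
      fin_cases i
      · show G 0 = I 0
        have h2 : (G 0 - I 0) * ((b 0 - a 0) * (A 1 - a 1) - (b 1 - a 1) * (A 0 - a 0)) = 0 := by
          linear_combination (b 0 - a 0) * eL + (A 0 - a 0) * eM
        have h3 := (mul_eq_zero.1 h2).resolve_right hL0
        linear_combination h3
      · show G 1 = I 1
        have h2 : (G 1 - I 1) * ((b 0 - a 0) * (A 1 - a 1) - (b 1 - a 1) * (A 0 - a 0)) = 0 := by
          linear_combination (b 1 - a 1) * eL + (A 1 - a 1) * eM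
        have h3 := (mul_eq_zero.1 h2).resolve_right hL0
        linear_combination h3
    rw [show I = G from hGI.symm]
    have hset : ({G, H, G} : Set (Fin 2 → k)) = {G, H} := by
      ext x; simp only [Set.mem_insert_iff, Set.mem_singleton_iff]; tauto
    rw [hset]
    exact collinear_pair k G H
  · by_cases hD3 : (((0 : k) + v * (L - (0 : k)) - lB) * (L + u * (mB - L) - (0 : k)) - ((0 : k) + v * ((0 : k) - (0 : k)) - mB) * ((0 : k) + u * (lB - (0 : k)) - L)) = 0
    · -- degenerate: C = B and c = b, show G = H
      have hu' : u = 1 := by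
        have huKc : (u - 1) * ((lB - (0 : k)) * ((0 : k) + v * ((0 : k) - (0 : k)) - L) - (mB - L) * ((0 : k) + v * (L - (0 : k)) - (0 : k))) = 0 := by
          linear_combination (t6 - 1) * hD3 - ((0 : k) + v * ((0 : k) - (0 : k)) - mB) * (T5a - T6a) + ((0 : k) + v * (L - (0 : k)) - lB) * (T5b - T6b)
        exact sub_eq_zero.1 ((mul_eq_zero.1 huKc).resolve_right nKc)
      have hv' : v = 1 := by
        have hvLC : (v - 1) * ((L - (0 : k)) * (L + u * (mB - L) - (0 : k)) - ((0 : k) - (0 : k)) * ((0 : k) + u * (lB - (0 : k)) - (0 : k))) = 0 := by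
          linear_combination (1 - t5) * hD3 + (L + u * (mB - L) - (0 : k)) * (T5a - T6a) - ((0 : k) + u * (lB - (0 : k)) - L) * (T5b - T6b)
        exact sub_eq_zero.1 ((mul_eq_zero.1 hvLC).resolve_right nLC)
      subst hu' hv'
      have halpha : (t1 - t3) * (((L - (0 : k)) * (mB - (0 : k)) - ((0 : k) - L) * (lB - (0 : k)))) = 0 := by
        linear_combination (mB - (0 : k)) * ((T1a - T3a) - (T2a - T4a)) - (lB - (0 : k)) * ((T1b - T3b) - (T2b - T4b))
      have halpha' : t1 - t3 = 0 := (mul_eq_zero.1 halpha).resolve_right hD1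
      have eL : lG = lH := by linear_combination (L - (0 : k)) * halpha' - T1a + T3a
      have eM : mG = mH := by linear_combination ((0 : k) - L) * halpha' - T1b + T3b
      have hGI : G = H := by
        simp only [hlG, hlH] at eL
        simp only [hmG, hmH] at eM
        funext i
        fin_cases i
        · show G 0 = H 0
          have h2 : (G 0 - H 0) * ((b 0 - a 0) * (A 1 - a 1) - (b 1 - a 1) * (A 0 - a 0)) = 0 := by
            linear_combination (b 0 - a 0) * eL + (A 0 - a 0) * eM
          have h3 := (mul_eq_zero.1 h2).resolve_right hL0
          linear_combination h3
        · show G 1 = H 1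
          have h2 : (G 1 - H 1) * ((b 0 - a 0) * (A 1 - a 1) - (b 1 - a 1) * (A 0 - a 0)) = 0 := by
            linear_combination (b 1 - a 1) * eL + (A 1 - a 1) * eM
          have h3 := (mul_eq_zero.1 h2).resolve_right hL0
          linear_combination h3
      rw [show H = G from hGI.symm]
      have hset : ({G, G, I} : Set (Fin 2 → k)) = {G, I} := by
        ext x; simp only [Set.mem_insert_iff, Set.mem_singleton_iff]; tauto
      rw [hset]
      exact collinear_pair k G I
    · -- main case
      have z1 : t1 * ((L - (0 : k)) * (mB - (0 : k)) - ((0 : k) - L) * (lB - (0 : k))) - (((0 : k) - (0 : k)) * (mB - (0 : k)) - ((0 : k) - L) * (lB - (0 : k))) = 0 := by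
        linear_combination (mB - (0 : k)) * (T1a - T2a) - (lB - (0 : k)) * (T1b - T2b)
      have z3 : t3 * (((0 : k) + v * (L - (0 : k)) - (0 : k)) * (L + u * (mB - L) - (0 : k)) - ((0 : k) + v * ((0 : k) - (0 : k)) - L) * ((0 : k) + u * (lB - (0 : k)) - (0 : k))) - (((0 : k) - (0 : k)) * (L + u * (mB - L) - (0 : k)) - ((0 : k) - L) * ((0 : k) + u * (lB - (0 : k)) - (0 : k))) = 0 := by
        linear_combination (L + u * (mB - L) - (0 : k)) * (T3a - T4a) - ((0 : k) + u * (lB - (0 : k)) - (0 : k)) * (T3b - T4b)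
      have z5 : t5 * (((0 : k) + v * (L - (0 : k)) - lB) * (L + u * (mB - L) - (0 : k)) - ((0 : k) + v * ((0 : k) - (0 : k)) - mB) * ((0 : k) + u * (lB - (0 : k)) - L)) - ((L - lB) * (L + u * (mB - L) - (0 : k)) - ((0 : k) - mB) * ((0 : k) + u * (lB - (0 : k)) - L)) = 0 := by
        linear_combination (L + u * (mB - L) - (0 : k)) * (T5a - T6a) - ((0 : k) + u * (lB - (0 : k)) - L) * (T5b - T6b)
      have dx0 : lH - lG = t3 * ((0 : k) + v * (L - (0 : k)) - (0 : k)) - t1 * (L - (0 : k)) := by linear_combination T1a - T3a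
      have dx1 : mH - mG = t3 * ((0 : k) + v * ((0 : k) - (0 : k)) - L) - t1 * ((0 : k) - L) := by linear_combination T1b - T3b
      have dy0 : lI - lG = t5 * ((0 : k) + v * (L - (0 : k)) - lB) - t1 * (L - (0 : k)) + (lB - (0 : k)) := by
        linear_combination T1a - T5a
      have dy1 : mI - mG = t5 * ((0 : k) + v * ((0 : k) - (0 : k)) - mB) - t1 * ((0 : k) - L) + (mB - L) := by
        linear_combination T1b - T5b
      have hM : ((L - (0 : k)) * (mB - (0 : k)) - ((0 : k) - L) * (lB - (0 : k))) * (((L - (0 : k)) * (mB - (0 : k)) - ((0 : k) - L) * (lB - (0 : k))) * ((((0 : k) + v * (L - (0 : k)) - (0 : k)) * (L + u * (mB - L) - (0 : k)) - ((0 : k) + v * ((0 : k) - (0 : k)) - L) * ((0 : k) + u * (lB - (0 : k)) - (0 : k))) * (((0 : k) + v * (L - (0 : k)) - lB) * (L + u * (mB - L) - (0 : k)) - ((0 : k) + v * ((0 : k) - (0 : k)) - mB) * ((0 : k) + u * (lB - (0 : k)) - L)))) ≠ 0 :=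
        mul_ne_zero hD1 (mul_ne_zero hD1 (mul_ne_zero hD2 hD3))
      have key : ((t3 * ((0 : k) + v * (L - (0 : k)) - (0 : k)) - t1 * (L - (0 : k))) * (t5 * ((0 : k) + v * ((0 : k) - (0 : k)) - mB) - t1 * ((0 : k) - L) + (mB - L)) -
          (t3 * ((0 : k) + v * ((0 : k) - (0 : k)) - L) - t1 * ((0 : k) - L)) * (t5 * ((0 : k) + v * (L - (0 : k)) - lB) - t1 * (L - (0 : k)) + (lB - (0 : k)))) *
          (((L - (0 : k)) * (mB - (0 : k)) - ((0 : k) - L) * (lB - (0 : k))) * (((L - (0 : k)) * (mB - (0 : k)) - ((0 : k) - L) * (lB - (0 : k))) * ((((0 : k) + v * (L - (0 : k)) - (0 : k)) * (L + u * (mB - L) - (0 : k)) - ((0 : k) + v * ((0 : k) - (0 : k)) - L) * ((0 : k) + u * (lB - (0 : k)) - (0 : k))) * (((0 : k) + v * (L - (0 : k)) - lB) * (L + u * (mB - L) - (0 : k)) - ((0 : k) + v * ((0 : k) - (0 : k)) - mB) * ((0 : k) + u * (lB - (0 : k)) - L))))) = 0 := by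
        linear_combination (norm := ring1)
          (((((0 : k) - (0 : k)) * (L + u * (mB - L) - (0 : k)) - ((0 : k) - L) * ((0 : k) + u * (lB - (0 : k)) - (0 : k))) * ((L - (0 : k)) * (mB - (0 : k)) - ((0 : k) - L) * (lB - (0 : k))) * ((0 : k) + v * (L - (0 : k)) - (0 : k)) - (((0 : k) - (0 : k)) * (mB - (0 : k)) - ((0 : k) - L) * (lB - (0 : k))) * (((0 : k) + v * (L - (0 : k)) - (0 : k)) * (L + u * (mB - L) - (0 : k)) - ((0 : k) + v * ((0 : k) - (0 : k)) - L) * ((0 : k) + u * (lB - (0 : k)) - (0 : k))) * (L - (0 : k))) * ((L - (0 : k)) * (mB - (0 : k)) - ((0 : k) - L) * (lB - (0 : k))) * ((0 : k) + v * ((0 : k) - (0 : k)) - mB) - ((((0 : k) - (0 : k)) * (L + u * (mB - L) - (0 : k)) - ((0 : k) - L) * ((0 : k) + u * (lB - (0 : k)) - (0 : k))) * ((L - (0 : k)) * (mB - (0 : k)) - ((0 : k) - L) * (lB - (0 : k))) * ((0 : k) + v * ((0 : k) - (0 : k)) - L) - (((0 : k) - (0 : k)) * (mB - (0 : k)) -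 ((0 : k) - L) * (lB - (0 : k))) * (((0 : k) + v * (L - (0 : k)) - (0 : k)) * (L + u * (mB - L) - (0 : k)) - ((0 : k) + v * ((0 : k) - (0 : k)) - L) * ((0 : k) + u * (lB - (0 : k)) - (0 : k))) * ((0 : k) - L)) * ((L - (0 : k)) * (mB - (0 : k)) - ((0 : k) - L) * (lB - (0 : k))) * ((0 : k) + v * (L - (0 : k)) - lB)) * z5 + (((((0 : k) - (0 : k)) * (L + u * (mB - L) - (0 : k)) - ((0 : k) - L) * ((0 : k) + u * (lB - (0 : k)) - (0 : k))) * ((L - (0 : k)) * (mB - (0 : k)) - ((0 : k) - L) * (lB - (0 : k))) * ((0 : k) + v * ((0 : k) - (0 : k)) - L) - (((0 : k) - (0 : k)) * (mB - (0 : k)) - ((0 : k) - L) * (lB - (0 : k))) * (((0 : k) + v * (L - (0 : k)) - (0 : k)) * (L + u * (mB - L) - (0 : k)) - ((0 : k) + v * ((0 : k) - (0 : k)) - L) * ((0 : k) + u * (lB - (0 : k)) - (0 : k))) * ((0 : k) - L)) * (((0 : k) + v * (L - (0 : k)) - lB) * (L + u * (mB - L) - (0 : k)) - ((0 : k) + v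 * ((0 : k) - (0 : k)) - mB) * ((0 : k) + u * (lB - (0 : k)) - L)) * (L - (0 : k)) - ((((0 : k) - (0 : k)) * (L + u * (mB - L) - (0 : k)) - ((0 : k) - L) * ((0 : k) + u * (lB - (0 : k)) - (0 : k))) * ((L - (0 : k)) * (mB - (0 : k)) - ((0 : k) - L) * (lB - (0 : k))) * ((0 : k) + v * (L - (0 : k)) - (0 : k)) - (((0 : k) - (0 : k)) * (mB - (0 : k)) - ((0 : k) - L) * (lB - (0 : k))) * (((0 : k) + v * (L - (0 : k)) - (0 : k)) * (L + u * (mB - L) - (0 : k)) - ((0 : k) + v * ((0 : k) - (0 : k)) - L) * ((0 : k) + u * (lB - (0 : k)) - (0 : k))) * (L - (0 : k))) * (((0 : k) + v * (L - (0 : k)) - lB) * (L + u * (mB - L) - (0 : k)) - ((0 : k) + v * ((0 : k) - (0 : k)) - mB) * ((0 : k) + u * (lB - (0 : k)) - L)) * ((0 : k) - L) + (((0 : k) + v * (L - (0 : k)) - (0 : k)) * (L + u * (mB - L) - (0 : k)) - ((0 : k) + v * ((0 : k) - (0 : k)) - L) * ((0 : k) + u * (lB - (0 : k)) - (0 : k)))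 * ((0 : k) - L) * (((L - lB) * (L + u * (mB - L) - (0 : k)) - ((0 : k) - mB) * ((0 : k) + u * (lB - (0 : k)) - L)) * ((L - (0 : k)) * (mB - (0 : k)) - ((0 : k) - L) * (lB - (0 : k))) * ((0 : k) + v * (L - (0 : k)) - lB) - (((0 : k) - (0 : k)) * (mB - (0 : k)) - ((0 : k) - L) * (lB - (0 : k))) * (((0 : k) + v * (L - (0 : k)) - lB) * (L + u * (mB - L) - (0 : k)) - ((0 : k) + v * ((0 : k) - (0 : k)) - mB) * ((0 : k) + u * (lB - (0 : k)) - L)) * (L - (0 : k)) + ((L - (0 : k)) * (mB - (0 : k)) - ((0 : k) - L) * (lB - (0 : k))) * (((0 : k) + v * (L - (0 : k)) - lB) * (L + u * (mB - L) - (0 : k)) - ((0 : k) + v * ((0 : k) - (0 : k)) - mB) * ((0 : k) + u * (lB - (0 : k)) - L)) * (lB - (0 : k))) - (((0 : k) + v * (L - (0 : k)) - (0 : k)) * (L + u * (mB - L) - (0 : k)) - ((0 : k) + v * ((0 : k) - (0 : k)) - L) * ((0 : k) + u * (lB - (0 : k)) - (0 : k))) * (L - (0 : k)) * (((L - lB)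 * (L + u * (mB - L) - (0 : k)) - ((0 : k) - mB) * ((0 : k) + u * (lB - (0 : k)) - L)) * ((L - (0 : k)) * (mB - (0 : k)) - ((0 : k) - L) * (lB - (0 : k))) * ((0 : k) + v * ((0 : k) - (0 : k)) - mB) - (((0 : k) - (0 : k)) * (mB - (0 : k)) - ((0 : k) - L) * (lB - (0 : k))) * (((0 : k) + v * (L - (0 : k)) - lB) * (L + u * (mB - L) - (0 : k)) - ((0 : k) + v * ((0 : k) - (0 : k)) - mB) * ((0 : k) + u * (lB - (0 : k)) - L)) * ((0 : k) - L) + ((L - (0 : k)) * (mB - (0 : k)) - ((0 : k) - L) * (lB - (0 : k))) * (((0 : k) + v * (L - (0 : k)) - lB) * (L + u * (mB - L) - (0 : k)) - ((0 : k) + v * ((0 : k) - (0 : k)) - mB) * ((0 : k) + u * (lB - (0 : k)) - L)) * (mB - L))) * z1 + (((L - (0 : k)) * (mB - (0 : k)) - ((0 : k) - L) * (lB - (0 : k))) * ((0 : k) + v * (L - (0 : k)) - (0 : k)) * (((L - lB) * (L + u * (mB - L) - (0 : k)) - ((0 : k) - mB) * ((0 : k) + u * (lB - (0 : k)) - L))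 * ((L - (0 : k)) * (mB - (0 : k)) - ((0 : k) - L) * (lB - (0 : k))) * ((0 : k) + v * ((0 : k) - (0 : k)) - mB) - (((0 : k) - (0 : k)) * (mB - (0 : k)) - ((0 : k) - L) * (lB - (0 : k))) * (((0 : k) + v * (L - (0 : k)) - lB) * (L + u * (mB - L) - (0 : k)) - ((0 : k) + v * ((0 : k) - (0 : k)) - mB) * ((0 : k) + u * (lB - (0 : k)) - L)) * ((0 : k) - L) + ((L - (0 : k)) * (mB - (0 : k)) - ((0 : k) - L) * (lB - (0 : k))) * (((0 : k) + v * (L - (0 : k)) - lB) * (L + u * (mB - L) - (0 : k)) - ((0 : k) + v * ((0 : k) - (0 : k)) - mB) * ((0 : k) + u * (lB - (0 : k)) - L)) * (mB - L)) - ((L - (0 : k)) * (mB - (0 : k)) - ((0 : k) - L) * (lB - (0 : k))) * ((0 : k) + v * ((0 : k) - (0 : k)) - L) * (((L - lB) * (L + u * (mB - L) - (0 : k)) - ((0 : k) - mB) * ((0 : k) + u * (lB - (0 : k)) - L)) * ((L - (0 : k)) * (mB - (0 : k)) - ((0 : k) - L) * (lB - (0 : k))) * ((0 : k) + v * (L -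 (0 : k)) - lB) - (((0 : k) - (0 : k)) * (mB - (0 : k)) - ((0 : k) - L) * (lB - (0 : k))) * (((0 : k) + v * (L - (0 : k)) - lB) * (L + u * (mB - L) - (0 : k)) - ((0 : k) + v * ((0 : k) - (0 : k)) - mB) * ((0 : k) + u * (lB - (0 : k)) - L)) * (L - (0 : k)) + ((L - (0 : k)) * (mB - (0 : k)) - ((0 : k) - L) * (lB - (0 : k))) * (((0 : k) + v * (L - (0 : k)) - lB) * (L + u * (mB - L) - (0 : k)) - ((0 : k) + v * ((0 : k) - (0 : k)) - mB) * ((0 : k) + u * (lB - (0 : k)) - L)) * (lB - (0 : k)))) * z3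
          + mul_eq_zero_of_left z3 (((L - (0 : k)) * (mB - (0 : k)) - ((0 : k) - L) * (lB - (0 : k))) * (((0 : k) + v * (L - (0 : k)) - (0 : k)) * (((L - (0 : k)) * (mB - (0 : k)) - ((0 : k) - L) * (lB - (0 : k))) * ((0 : k) + v * ((0 : k) - (0 : k)) - mB) * (t5 * (((0 : k) + v * (L - (0 : k)) - lB) * (L + u * (mB - L) - (0 : k)) - ((0 : k) + v * ((0 : k) - (0 : k)) - mB) * ((0 : k) + u * (lB - (0 : k)) - L)) - ((L - lB) * (L + u * (mB - L) - (0 : k)) - ((0 : k) - mB) * ((0 : k) + u * (lB - (0 : k)) - L))) - (((0 : k) + v * (L - (0 : k)) - lB) * (L + u * (mB - L) - (0 : k)) - ((0 : k) + v * ((0 : k) - (0 : k)) - mB) * ((0 : k) + u * (lB - (0 : k)) - L)) * ((0 : k) - L) * (t1 * ((L - (0 : k)) * (mB - (0 : k)) - ((0 : k) - L) * (lB - (0 : k))) - (((0 : k) - (0 : k)) * (mB - (0 : k)) - ((0 : k) - L) * (lB - (0 : k))))) - ((0 : k) + v * ((0 : k) - (0 : k)) - L) * (((L - (0 : k)) *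 (mB - (0 : k)) - ((0 : k) - L) * (lB - (0 : k))) * ((0 : k) + v * (L - (0 : k)) - lB) * (t5 * (((0 : k) + v * (L - (0 : k)) - lB) * (L + u * (mB - L) - (0 : k)) - ((0 : k) + v * ((0 : k) - (0 : k)) - mB) * ((0 : k) + u * (lB - (0 : k)) - L)) - ((L - lB) * (L + u * (mB - L) - (0 : k)) - ((0 : k) - mB) * ((0 : k) + u * (lB - (0 : k)) - L))) - (((0 : k) + v * (L - (0 : k)) - lB) * (L + u * (mB - L) - (0 : k)) - ((0 : k) + v * ((0 : k) - (0 : k)) - mB) * ((0 : k) + u * (lB - (0 : k)) - L)) * (L - (0 : k)) * (t1 * ((L - (0 : k)) * (mB - (0 : k)) - ((0 : k) - L) * (lB - (0 : k))) - (((0 : k) - (0 : k)) * (mB - (0 : k)) - ((0 : k) - L) * (lB - (0 : k)))))))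
          - mul_eq_zero_of_left z1 ((((0 : k) + v * (L - (0 : k)) - (0 : k)) * (L + u * (mB - L) - (0 : k)) - ((0 : k) + v * ((0 : k) - (0 : k)) - L) * ((0 : k) + u * (lB - (0 : k)) - (0 : k))) * ((L - (0 : k)) * (((L - (0 : k)) * (mB - (0 : k)) - ((0 : k) - L) * (lB - (0 : k))) * ((0 : k) + v * ((0 : k) - (0 : k)) - mB) * (t5 * (((0 : k) + v * (L - (0 : k)) - lB) * (L + u * (mB - L) - (0 : k)) - ((0 : k) + v * ((0 : k) - (0 : k)) - mB) * ((0 : k) + u * (lB - (0 : k)) - L)) - ((L - lB) * (L + u * (mB - L) - (0 : k)) - ((0 : k) - mB) * ((0 : k) + u * (lB - (0 : k)) - L))) - (((0 : k) + v * (L - (0 : k)) - lB) * (L + u * (mB - L) - (0 : k)) - ((0 : k) + v * ((0 : k) - (0 : k)) - mB) * ((0 : k) + u * (lB - (0 : k)) - L)) * ((0 : k) - L) * (t1 * ((L - (0 : k)) * (mB - (0 : k)) - ((0 : k) - L) * (lB - (0 : k))) - (((0 : k) - (0 : k)) * (mB - (0 : k)) - ((0 : k) - L) * (lB - (0 : k)))))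 - ((0 : k) - L) * (((L - (0 : k)) * (mB - (0 : k)) - ((0 : k) - L) * (lB - (0 : k))) * ((0 : k) + v * (L - (0 : k)) - lB) * (t5 * (((0 : k) + v * (L - (0 : k)) - lB) * (L + u * (mB - L) - (0 : k)) - ((0 : k) + v * ((0 : k) - (0 : k)) - mB) * ((0 : k) + u * (lB - (0 : k)) - L)) - ((L - lB) * (L + u * (mB - L) - (0 : k)) - ((0 : k) - mB) * ((0 : k) + u * (lB - (0 : k)) - L))) - (((0 : k) + v * (L - (0 : k)) - lB) * (L + u * (mB - L) - (0 : k)) - ((0 : k) + v * ((0 : k) - (0 : k)) - mB) * ((0 : k) + u * (lB - (0 : k)) - L)) * (L - (0 : k)) * (t1 * ((L - (0 : k)) * (mB - (0 : k)) - ((0 : k) - L) * (lB - (0 : k))) - (((0 : k) - (0 : k)) * (mB - (0 : k)) - ((0 : k) - L) * (lB - (0 : k)))))))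
      have keyT : (lH - lG) * (mI - mG) - (mH - mG) * (lI - lG) = 0 := by
        rw [dx0, dx1, dy0, dy1]
        exact (mul_eq_zero.1 key).resolve_right hM
      apply col_of_det
      simp only [hlG, hmG, hlH, hmH, hlI, hmI] at keyT
      have h2 : ((H 0 - G 0) * (I 1 - G 1) - (H 1 - G 1) * (I 0 - G 0)) * ((b 0 - a 0) * (A 1 - a 1) - (b 1 - a 1) * (A 0 - a 0)) = 0 := by
        linear_combination keyT
      exact (mul_eq_zero.1 h2).resolve_right hL0
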